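/- Weak bilateral semantic harmony: for every base B, every formula χ, and each sign * ∈ {+,−}: ⊩*_B χ if and only if ⊩*ᴰ_{(B)^D} (χ)^D, where (+)^D = − and (−)^D = +. -/

import Mathlib

/-- Signs: `pos` for proof/assertion, `neg` for refutation/rejection. -/
inductive Sign where
  | pos
  | neg
deriving DecidableEq

/-- The dual of a sign. -/
def Sign.dual : Sign → Sign
  | .pos => .neg
  | .neg => .pos

/-- Formulas of the bilateral logic 2Int. -/
inductive Form where
  | atom : ℕ → Form
  | bot : Form
  | top : Form
  | and : Form → Form → Form
  | or : Form → Form → Form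
  | imp : Form → Form → Form
  | coimp : Form → Form → Form
deriving DecidableEq

/-- A premise of an atomic rule: the sign required (proof or refutation), the premise atom,
and the sets of dischargeable atomic proof assumptions and refutation assumptions. -/
structure Premise where
  sign : Sign
  concl : ℕ
  dischargePf : Set ℕ
  dischargeRf : Set ℕ

/-- An atomic rule: a list of premises, a marking as proof (`pos`) or refutation (`neg`) rule,
and an atomic conclusion. -/
structure AtomicRule where
  prems : List Premise
  sign : Sign
  concl : ℕ

/-- A bilateral atomic system (base) is a set of atomic rules. -/
abbrev Base := Set AtomicRule

/-- `AtDeriv B s Γ Δ p` formalizes `Γ;Δ ⊢^s_B p`: there is a deduction in `B` of the atom `p`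
whose open atomic proof assumptions are contained in `Γ` and open atomic refutation
assumptions in `Δ`, consisting of a single assumption of sign `s` or ending with a rule of
sign `s`. -/
inductive AtDeriv (B : Base) : Sign → Set ℕ → Set ℕ → ℕ → Prop
  | hypPos {Γ Δ : Set ℕ} {p : ℕ} : p ∈ Γ → AtDeriv B .pos Γ Δ p
  | hypNeg {Γ Δ : Set ℕ} {p : ℕ} : p ∈ Δ → AtDeriv B .neg Γ Δ p
  | app {Γ Δ : Set ℕ} {R : AtomicRule} (hR : R ∈ B)
      (h : ∀ pr ∈ R.prems,
        AtDeriv B pr.sign (Γ ∪ pr.dischargePf) (Δ ∪ pr.dischargeRf) pr.concl) :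
      AtDeriv B R.sign Γ Δ R.concl

/-- Bilateral validity (support) `⊩^s_B φ`, by recursion on the formula. -/
def Supp : Form → Base → Sign → Prop
  | .atom p, B, s => AtDeriv B s ∅ ∅ p
  | .bot, B, .pos => ∀ p : ℕ, AtDeriv B .pos ∅ ∅ p ∧ AtDeriv B .neg ∅ ∅ p
  | .bot, _, .neg => True
  | .top, _, .pos => True
  | .top, B, .neg => ∀ p : ℕ, AtDeriv B .pos ∅ ∅ p ∧ AtDeriv B .neg ∅ ∅ p
  | .and φ ψ, B, .pos => Supp φ B .pos ∧ Supp ψ B .pos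
  | .and φ ψ, B, .neg => ∀ C : Base, B ⊆ C → ∀ p : ℕ,
      (((∀ D : Base, C ⊆ D → Supp φ D .neg → AtDeriv D .pos ∅ ∅ p) ∧
        (∀ D : Base, C ⊆ D → Supp ψ D .neg → AtDeriv D .pos ∅ ∅ p)) →
        AtDeriv C .pos ∅ ∅ p) ∧
      (((∀ D : Base, C ⊆ D → Supp φ D .neg → AtDeriv D .neg ∅ ∅ p) ∧
        (∀ D : Base, C ⊆ D → Supp ψ D .neg → AtDeriv D .neg ∅ ∅ p)) →
        AtDeriv C .neg ∅ ∅ p)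
  | .or φ ψ, B, .pos => ∀ C : Base, B ⊆ C → ∀ p : ℕ,
      (((∀ D : Base, C ⊆ D → Supp φ D .pos → AtDeriv D .pos ∅ ∅ p) ∧
        (∀ D : Base, C ⊆ D → Supp ψ D .pos → AtDeriv D .pos ∅ ∅ p)) →
        AtDeriv C .pos ∅ ∅ p) ∧
      (((∀ D : Base, C ⊆ D → Supp φ D .pos → AtDeriv D .neg ∅ ∅ p) ∧
        (∀ D : Base, C ⊆ D → Supp ψ D .pos → AtDeriv D .neg ∅ ∅ p)) →
        AtDeriv C .neg ∅ ∅ p)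
  | .or φ ψ, B, .neg => Supp φ B .neg ∧ Supp ψ B .neg
  | .imp φ ψ, B, .pos => ∀ C : Base, B ⊆ C → Supp φ C .pos → Supp ψ C .pos
  | .imp φ ψ, B, .neg => Supp φ B .pos ∧ Supp ψ B .neg
  | .coimp φ ψ, B, .pos => Supp φ B .pos ∧ Supp ψ B .neg
  | .coimp φ ψ, B, .neg => ∀ C : Base, B ⊆ C → Supp ψ C .neg → Supp φ C .neg

/-- Dual of a premise. -/
def Premise.dual (pr : Premise) : Premise :=
  ⟨pr.sign.dual, pr.concl, pr.dischargeRf, pr.dischargePf⟩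

/-- Dual of an atomic rule. -/
def AtomicRule.dual (R : AtomicRule) : AtomicRule :=
  ⟨R.prems.map Premise.dual, R.sign.dual, R.concl⟩

/-- Dual of a base. -/
def Base.dual (B : Base) : Base := AtomicRule.dual '' B

/-- Dual of a formula. -/
def Form.dual : Form → Form
  | .atom p => .atom p
  | .bot => .top
  | .top => .bot
  | .and φ ψ => (φ.dual).or (ψ.dual)
  | .or φ ψ => (φ.dual).and (ψ.dual)
  | .imp φ ψ => (ψ.dual).coimp (φ.dual)
  | .coimp φ ψ => (ψ.dual).imp (φ.dual)


@[simp] lemma Sign.dual_pos : Sign.pos.dual = Sign.neg := rfl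

@[simp] lemma Sign.dual_neg : Sign.neg.dual = Sign.pos := rfl

@[simp] lemma Sign.dual_dual (s : Sign) : s.dual.dual = s := by cases s <;> rfl

@[simp] lemma Premise.dual_dual (pr : Premise) : pr.dual.dual = pr := by
  cases pr; simp [Premise.dual]

@[simp] lemma AtomicRule.dual_dual (R : AtomicRule) : R.dual.dual = R := by
  cases R; simp [AtomicRule.dual, Function.comp_def]

@[simp] lemma Base.dual_dual (B : Base) : B.dual.dual = B := by
  simp [Base.dual, Set.image_image]

lemma Base.dual_mono {B C : Base} (h : B ⊆ C) : B.dual ⊆ C.dual :=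
  Set.image_mono h

lemma AtDeriv.dual {B : Base} {s : Sign} {Γ Δ : Set ℕ} {p : ℕ}
    (h : AtDeriv B s Γ Δ p) : AtDeriv B.dual s.dual Δ Γ p := by
  induction h with
  | hypPos h => exact .hypNeg h
  | hypNeg h => exact .hypPos h
  | @app Γ Δ R hR h ih =>
    have key : AtDeriv B.dual R.dual.sign Δ Γ R.dual.concl := by
      apply AtDeriv.app (Set.mem_image_of_mem _ hR)
      intro pr hpr
      simp only [AtomicRule.dual, List.mem_map] at hpr
      obtain ⟨q, hq, rfl⟩ := hpr
      simpa [Premise.dual, Base.dual] using ih q hq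
    exact key

lemma atDeriv_dual_iff {B : Base} {s : Sign} {p : ℕ} :
    AtDeriv B s ∅ ∅ p ↔ AtDeriv B.dual s.dual ∅ ∅ p :=
  ⟨fun h => h.dual, fun h => by simpa using h.dual⟩

lemma sub_dual_iff {B C : Base} : B ⊆ C.dual ↔ B.dual ⊆ C :=
  ⟨fun h => by simpa using Base.dual_mono h,
   fun h => by simpa using Base.dual_mono h⟩

lemma orpos_iff_andneg (φ ψ φ' ψ' : Form)
    (hφ : ∀ D : Base, Supp φ D .pos ↔ Supp φ' D.dual .neg)
    (hψ : ∀ D : Base, Supp ψ D .pos ↔ Supp ψ' D.dual .neg)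
    (B : Base) :
    Supp (φ.or ψ) B .pos ↔ Supp (φ'.and ψ') B.dual .neg := by
  simp only [Supp]
  constructor
  · intro h C' hC' p
    have hC : B ⊆ C'.dual := sub_dual_iff.mpr (by simpa using hC')
    have h2 := h C'.dual hC p
    constructor
    · rintro ⟨a, b⟩
      have : AtDeriv C'.dual .neg ∅ ∅ p := by
        apply h2.2
        constructor
        · intro D hD hs
          have hDd : C' ⊆ D.dual := sub_dual_iff.mpr (by simpa using hD)
          have := a D.dual hDd ((hφ D).mp hs)
          simpa using this.dual
        · intro D hD hs
          have hDd : C' ⊆ D.dual := sub_dual_iff.mpr (by simpa using hD)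
          have := b D.dual hDd ((hψ D).mp hs)
          simpa using this.dual
      simpa using this.dual
    · rintro ⟨a, b⟩
      have : AtDeriv C'.dual .pos ∅ ∅ p := by
        apply h2.1
        constructor
        · intro D hD hs
          have hDd : C' ⊆ D.dual := sub_dual_iff.mpr (by simpa using hD)
          have := a D.dual hDd ((hφ D).mp hs)
          simpa using this.dual
        · intro D hD hs
          have hDd : C' ⊆ D.dual := sub_dual_iff.mpr (by simpa using hD)
          have := b D.dual hDd ((hψ D).mp hs)
          simpa using this.dual
      simpa using this.dual
  · intro h C hC p
    have hC' : B.dual ⊆ C.dual := Base.dual_mono hC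
    have h2 := h C.dual hC' p
    constructor
    · rintro ⟨a, b⟩
      have : AtDeriv C.dual .neg ∅ ∅ p := by
        apply h2.2
        constructor
        · intro D hD hs
          have hDd : C ⊆ D.dual := sub_dual_iff.mpr hD
          have hs' : Supp φ D.dual .pos := (hφ D.dual).mpr (by simpa using hs)
          have := a D.dual hDd hs'
          simpa using this.dual
        · intro D hD hs
          have hDd : C ⊆ D.dual := sub_dual_iff.mpr hD
          have hs' : Supp ψ D.dual .pos := (hψ D.dual).mpr (by simpa using hs)
          have := b D.dual hDd hs'
          simpa using this.dual
      simpa using this.dual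
    · rintro ⟨a, b⟩
      have : AtDeriv C.dual .pos ∅ ∅ p := by
        apply h2.1
        constructor
        · intro D hD hs
          have hDd : C ⊆ D.dual := sub_dual_iff.mpr hD
          have hs' : Supp φ D.dual .pos := (hφ D.dual).mpr (by simpa using hs)
          have := a D.dual hDd hs'
          simpa using this.dual
        · intro D hD hs
          have hDd : C ⊆ D.dual := sub_dual_iff.mpr hD
          have hs' : Supp ψ D.dual .pos := (hψ D.dual).mpr (by simpa using hs)
          have := b D.dual hDd hs'
          simpa using this.dual
      simpa using this.dual

lemma supp_dual_iff : ∀ (χ : Form) (B : Base) (s : Sign),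
    Supp χ B s ↔ Supp χ.dual B.dual s.dual := by
  intro χ
  induction χ with
  | atom p =>
    intro B s
    exact atDeriv_dual_iff
  | bot =>
    intro B s
    cases s with
    | pos =>
      simp only [Supp, Form.dual, Sign.dual]
      constructor
      · intro h p; exact ⟨((h p).2).dual, ((h p).1).dual⟩
      · intro h p
        exact ⟨by simpa using ((h p).2).dual, by simpa using ((h p).1).dual⟩
    | neg => simp [Supp, Form.dual, Sign.dual]
  | top =>
    intro B s
    cases s with
    | pos => simp [Supp, Form.dual, Sign.dual]
    | neg =>
      simp only [Supp, Form.dual, Sign.dual]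
      constructor
      · intro h p; exact ⟨((h p).2).dual, ((h p).1).dual⟩
      · intro h p
        exact ⟨by simpa using ((h p).2).dual, by simpa using ((h p).1).dual⟩
  | and φ ψ ihφ ihψ =>
    intro B s
    cases s with
    | pos =>
      simp only [Supp, Form.dual, Sign.dual]
      exact and_congr (ihφ B .pos) (ihψ B .pos)
    | neg =>
      show Supp (φ.and ψ) B .neg ↔ Supp ((φ.dual).or (ψ.dual)) B.dual .pos
      have := orpos_iff_andneg φ.dual ψ.dual φ ψ
        (fun D => ((ihφ D.dual .neg).trans (by simp [Sign.dual])).symm)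
        (fun D => ((ihψ D.dual .neg).trans (by simp [Sign.dual])).symm)
        B.dual
      rw [Base.dual_dual] at this
      exact this.symm
  | or φ ψ ihφ ihψ =>
    intro B s
    cases s with
    | pos =>
      exact orpos_iff_andneg φ ψ φ.dual ψ.dual
        (fun D => ihφ D .pos) (fun D => ihψ D .pos) B
    | neg =>
      simp only [Supp, Form.dual, Sign.dual]
      exact and_congr (ihφ B .neg) (ihψ B .neg)
  | imp φ ψ ihφ ihψ =>
    intro B s
    cases s with
    | pos =>
      show (∀ C : Base, B ⊆ C → Supp φ C .pos → Supp ψ C .pos) ↔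
        (∀ C : Base, B.dual ⊆ C → Supp φ.dual C .neg → Supp ψ.dual C .neg)
      constructor
      · intro h C hC hs
        have hB : B ⊆ C.dual := sub_dual_iff.mpr hC
        have hs' : Supp φ C.dual .pos := (ihφ C.dual .pos).mpr (by simpa using hs)
        have := (ihψ C.dual .pos).mp (h C.dual hB hs')
        simpa using this
      · intro h C hC hs
        have hB : B.dual ⊆ C.dual := Base.dual_mono hC
        have hs' : Supp φ.dual C.dual .neg := (ihφ C .pos).mp hs
        have := h C.dual hB hs'
        exact (ihψ C .pos).mpr this
    | neg =>
      show Supp φ B .pos ∧ Supp ψ B .neg ↔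
        Supp ψ.dual B.dual .pos ∧ Supp φ.dual B.dual .neg
      rw [ihφ B .pos, ihψ B .neg]
      exact and_comm
  | coimp φ ψ ihφ ihψ =>
    intro B s
    cases s with
    | pos =>
      show Supp φ B .pos ∧ Supp ψ B .neg ↔
        Supp ψ.dual B.dual .pos ∧ Supp φ.dual B.dual .neg
      rw [ihφ B .pos, ihψ B .neg]
      exact and_comm
    | neg =>
      show (∀ C : Base, B ⊆ C → Supp ψ C .neg → Supp φ C .neg) ↔
        (∀ C : Base, B.dual ⊆ C → Supp ψ.dual C .pos → Supp φ.dual C .pos)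
      constructor
      · intro h C hC hs
        have hB : B ⊆ C.dual := sub_dual_iff.mpr hC
        have hs' : Supp ψ C.dual .neg := (ihψ C.dual .neg).mpr (by simpa using hs)
        have := (ihφ C.dual .neg).mp (h C.dual hB hs')
        simpa using this
      · intro h C hC hs
        have hB : B.dual ⊆ C.dual := Base.dual_mono hC
        have hs' : Supp ψ.dual C.dual .pos := (ihψ C .neg).mp hs
        have := h C.dual hB hs'
        exact (ihφ C .neg).mpr this


theorem weak_bilateral_semantic_harmony (B : Base) (χ : Form) (s : Sign) :
    Supp χ B s ↔ Supp (Form.dual χ) (Base.dual B) (Sign.dual s) := by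
  exact supp_dual_iff χ B s
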